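/- Let T be a finite tree rooted at o, π a probability distribution on the vertices. There is a time-inhomogeneous Markov chain on T started at o reaching exactly the distribution π after depth(T) steps: at each vertex x, stay with probability π(x)/π(T_x) and otherwise move to a child c with probability π(T_c)/π(T_x) (staying forever once a stay occurs). Then the law of the chain at time depth(T) is exactly π. -/
import Mathlib


open Finset
open scoped Classical

/-- The subtree rooted at `x` in a rooted tree given by a parent map `prt`. -/
noncomputable def subtree {V : Type*} [Fintype V] (prt : V → V) (x : V) : Finset V :=
  univ.filter (fun z => ∃ n, prt^[n] z = x)

/-- The depth of the tree rooted at `o`: the maximal distance from `o` to any vertex. -/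
noncomputable def treeDepth {V : Type*} [Fintype V] (prt : V → V) (o : V) : ℕ :=
  sSup {n : ℕ | ∃ z, prt^[n] z = o ∧ ∀ m < n, prt^[m] z ≠ o}

/-- The (time-homogeneous lift of the) chain of the paper, on states `V × Bool` where
`(x, false)` is "active at `x`" and `(x, true)` is "stopped at `x`":
from `(x, false)` stay (stop) with probability `π(x)/π(T_x)`, and move to a child `c` with
probability `π(T_c)/π(T_x)`; stopped states are absorbing. -/
noncomputable def stopKernel {V : Type*} [Fintype V] (prt : V → V) (π : V → ℝ) :
    V × Bool → V × Bool → ℝ :=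
  fun s t =>
    match s, t with
    | (x, false), (y, true) =>
        if y = x then π x / (∑ z ∈ subtree prt x, π z) else 0
    | (x, false), (c, false) =>
        if prt c = x ∧ c ≠ x then
          (∑ z ∈ subtree prt c, π z) / (∑ z ∈ subtree prt x, π z)
        else 0
    | (x, true), (y, b) => if y = x ∧ b = true then 1 else 0

/-- Evolution of a distribution under a Markov kernel. -/
noncomputable def evolveK {S : Type*} [Fintype S] (K : S → S → ℝ) (μ : S → ℝ) : ℕ → S → ℝ
  | 0 => μ
  | (t + 1) => fun y => ∑ x, evolveK K μ t x * K x y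

/-- Started at the root `o`, the chain which at each vertex `x` stops with probability
`π(x)/π(T_x)` and otherwise moves to a child `c` with probability `π(T_c)/π(T_x)`
(stopped states absorbing) has law exactly `π` at time `depth(T)`. -/
theorem tree_chain_exact_mixing {V : Type*} [Fintype V] (prt : V → V) (o : V)
    (hroot : prt o = o) (hreach : ∀ z, ∃ n, prt^[n] z = o)
    (π : V → ℝ) (hpos : ∀ x, 0 < π x) (hsum : ∑ x, π x = 1) :
    ∀ y, evolveK (stopKernel prt π)
          (fun s => if s = (o, false) then 1 else 0) (treeDepth prt o) (y, false)
        + evolveK (stopKernel prt π)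
          (fun s => if s = (o, false) then 1 else 0) (treeDepth prt o) (y, true)
      = π y := by
  classical
  set S : V → ℝ := fun y => ∑ z ∈ subtree prt y, π z with hS_def
  have hmem : ∀ y z : V, z ∈ subtree prt y ↔ ∃ n, prt^[n] z = y := by
    intro y z; simp [subtree]
  have hself : ∀ y : V, y ∈ subtree prt y := fun y => (hmem y y).2 ⟨0, rfl⟩
  have hSpos : ∀ y, 0 < S y := fun y => Finset.sum_pos (fun z _ => hpos z) ⟨y, hself y⟩
  have hSne : ∀ y, S y ≠ 0 := fun y => (hSpos y).ne'
  set dep : V → ℕ := fun z => Nat.find (hreach z) with hdep_def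
  have hdep_spec : ∀ z, prt^[dep z] z = o := fun z => Nat.find_spec (hreach z)
  have hdep_min : ∀ z m, m < dep z → prt^[m] z ≠ o := fun z m hm => Nat.find_min (hreach z) hm
  have hdep_le : ∀ z n, prt^[n] z = o → dep z ≤ n := fun z n h => Nat.find_le h
  have hdep_o : dep o = 0 := Nat.le_zero.mp (hdep_le o 0 rfl)
  have hfixo : ∀ m, prt^[m] o = o := by
    intro m; induction m with
    | zero => rfl
    | succ m ih => rw [Function.iterate_succ_apply', ih, hroot]
  have hdep0 : ∀ y, dep y = 0 ↔ y = o := by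
    intro y
    constructor
    · intro h; have := hdep_spec y; rwa [h] at this
    · rintro rfl; exact hdep_o
  have hfix : ∀ y, prt y = y → y = o := by
    intro y h
    have hit : ∀ m, prt^[m] y = y := by
      intro m; induction m with
      | zero => rfl
      | succ m ih => rw [Function.iterate_succ_apply', ih, h]
    have := hdep_spec y
    rw [hit (dep y)] at this
    exact this
  have hdep_prt : ∀ z, z ≠ o → dep z = dep (prt z) + 1 := by
    intro z hz
    have h1 : 1 ≤ dep z := by
      rcases Nat.eq_zero_or_pos (dep z) with h | h
      · exact absurd ((hdep0 z).1 h) hz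
      · exact h
    have hle : dep (prt z) ≤ dep z - 1 := by
      apply hdep_le
      have h2 : prt^[dep z - 1] (prt z) = prt^[dep z - 1 + 1] z := by
        rw [Function.iterate_succ_apply]
      rw [h2, Nat.sub_add_cancel h1]
      exact hdep_spec z
    have hge : dep z ≤ dep (prt z) + 1 := by
      apply hdep_le
      rw [Function.iterate_succ_apply]
      exact hdep_spec (prt z)
    omega
  have habs : ∀ z k, dep z ≤ k → prt^[k] z = o := by
    intro z k hk
    obtain ⟨m, rfl⟩ := Nat.exists_eq_add_of_le hk
    rw [add_comm, Function.iterate_add_apply, hdep_spec, hfixo]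
  have hdep_iter : ∀ z k, k ≤ dep z → dep (prt^[k] z) + k = dep z := by
    intro z k
    induction k with
    | zero => intro _; simp
    | succ k ih =>
      intro hk
      have hih := ih (Nat.le_of_succ_le hk)
      have hne : prt^[k] z ≠ o := hdep_min z k (by omega)
      have hstep := hdep_prt (prt^[k] z) hne
      rw [Function.iterate_succ_apply']
      omega
  have hsubo : subtree prt o = univ := by
    ext z; simp only [Finset.mem_univ, iff_true, hmem]
    exact hreach z
  have hSo : S o = 1 := by rw [hS_def]; simp only [hsubo]; exact hsum
  set μ0 : V × Bool → ℝ := fun s => if s = (o, false) then 1 else 0 with hμ0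
  set K := stopKernel prt π with hK
  have key : ∀ t (y : V),
      evolveK K μ0 t (y, false) = (if dep y = t then S y else 0)
      ∧ evolveK K μ0 t (y, true) = (if dep y < t then π y else 0) := by
    intro t
    induction t with
    | zero =>
      intro y
      constructor
      · show μ0 (y, false) = _
        rw [hμ0]
        by_cases hy : y = o
        · simp [hy, hdep_o, hSo]
        · have : dep y ≠ 0 := fun h => hy ((hdep0 y).1 h)
          simp [hy, this, Prod.ext_iff]
      · show μ0 (y, true) = _
        rw [hμ0]; simp
    | succ t ih =>
      intro y
      have hfalse : evolveK K μ0 (t+1) (y, false)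
          = ∑ x : V, evolveK K μ0 t (x, false) * K (x, false) (y, false) := by
        show (∑ x : V × Bool, evolveK K μ0 t x * K x (y, false)) = _
        rw [Fintype.sum_prod_type]
        apply Finset.sum_congr rfl
        intro x _
        rw [Fintype.sum_bool]
        have h0 : K (x, true) (y, false) = 0 := by
          rw [hK]; simp [stopKernel]
        rw [h0, mul_zero, zero_add]
      have htrue : evolveK K μ0 (t+1) (y, true)
          = evolveK K μ0 t (y, false) * (π y / S y) + evolveK K μ0 t (y, true) := by
        show (∑ x : V × Bool, evolveK K μ0 t x * K x (y, true)) = _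
        rw [Fintype.sum_prod_type]
        have hterm : ∀ x : V, (∑ b : Bool, evolveK K μ0 t (x, b) * K (x, b) (y, true))
            = (if y = x then evolveK K μ0 t (x, false) * (π x / S x)
                + evolveK K μ0 t (x, true) else 0) := by
          intro x
          rw [Fintype.sum_bool]
          have h1 : K (x, true) (y, true) = if y = x then 1 else 0 := by
            rw [hK]; simp [stopKernel]
          have h2 : K (x, false) (y, true) = if y = x then π x / S x else 0 := by
            rw [hK]; simp [stopKernel, hS_def]
          rw [h1, h2]
          by_cases h : y = x <;> simp [h, add_comm]
        rw [Finset.sum_congr rfl (fun x _ => hterm x)]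
        simp
      constructor
      · rw [hfalse]
        have hKff : ∀ x : V, K (x, false) (y, false)
            = if prt y = x ∧ y ≠ x then S y / S x else 0 := by
          intro x; rw [hK]; simp [stopKernel, hS_def]
        by_cases hy : y = o
        · have hz : ∀ x : V, evolveK K μ0 t (x, false) * K (x, false) (y, false) = 0 := by
            intro x
            rw [hKff x, if_neg, mul_zero]
            rintro ⟨h1, h2⟩
            apply h2
            rw [hy] at h1 ⊢
            rw [hroot] at h1
            exact h1
          rw [Finset.sum_congr rfl (fun x _ => hz x), Finset.sum_const_zero, if_neg]
          rw [hy, hdep_o]; omega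
        · have hyp : y ≠ prt y := fun h => hy (hfix y h.symm)
          have hre : ∀ x : V, evolveK K μ0 t (x, false) * K (x, false) (y, false)
              = if prt y = x then evolveK K μ0 t (x, false) * (S y / S x) else 0 := by
            intro x
            rw [hKff x]
            by_cases h : prt y = x
            · rw [if_pos ⟨h, fun e => hyp (e.trans h.symm)⟩, if_pos h]
            · rw [if_neg (fun hc => h hc.1), if_neg h, mul_zero]
          rw [Finset.sum_congr rfl (fun x _ => hre x), Finset.sum_ite_eq,
            if_pos (Finset.mem_univ _), (ih (prt y)).1]
          by_cases h : dep (prt y) = t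
          · rw [if_pos h, if_pos (by rw [hdep_prt y hy]; omega), mul_comm,
              div_mul_cancel₀ _ (hSne _)]
          · rw [if_neg h, if_neg (by rw [hdep_prt y hy]; omega), zero_mul]
      · rw [htrue, (ih y).1, (ih y).2]
        rcases lt_trichotomy (dep y) t with h | h | h
        · rw [if_neg (by omega), if_pos h, if_pos (by omega), zero_mul, zero_add]
        · rw [if_pos h, if_neg (by omega), if_pos (by omega), add_zero,
            mul_div_assoc', mul_comm, mul_div_assoc, div_self (hSne y), mul_one]
        · rw [if_neg (by omega), if_neg (by omega), if_neg (by omega), zero_mul, zero_add]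
  set D := treeDepth prt o with hD
  have hDmem : ∀ y, dep y ≤ D := by
    intro y
    apply le_csSup
    · have hsubset : {n : ℕ | ∃ z, prt^[n] z = o ∧ ∀ m < n, prt^[m] z ≠ o} ⊆ Set.range dep := by
        rintro n ⟨z, h1, h2⟩
        exact ⟨z, le_antisymm (hdep_le z n h1)
          (le_of_not_gt (fun hlt => h2 _ hlt (hdep_spec z)))⟩
      exact BddAbove.mono hsubset (Set.finite_range dep).bddAbove
    · exact ⟨y, hdep_spec y, fun m hm => hdep_min y m hm⟩
  have hsingle : ∀ y, dep y = D → S y = π y := by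
    intro y hyD
    have hsub : subtree prt y = {y} := by
      apply Finset.Subset.antisymm
      · intro z hz
        rw [hmem] at hz
        obtain ⟨n, hn⟩ := hz
        rw [Finset.mem_singleton]
        by_cases hc : dep z ≤ n
        · have hyo : y = o := by rw [← hn]; exact habs z n hc
          have hD0 : D = 0 := by rw [← hyD, hyo, hdep_o]
          have hz0 : dep z = 0 := Nat.le_zero.mp (hD0 ▸ hDmem z)
          rw [(hdep0 z).1 hz0, hyo]
        · push_neg at hc
          have hiter := hdep_iter z n hc.le
          rw [hn] at hiter
          have hn0 : n = 0 := by have := hDmem z; omega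
          subst hn0
          exact hn
      · intro z hz
        rw [Finset.mem_singleton] at hz
        subst hz
        exact hself z
    rw [hS_def]
    simp [hsub]
  intro y
  obtain ⟨h1, h2⟩ := key D y
  rw [h1, h2]
  rcases eq_or_lt_of_le (hDmem y) with h | h
  · rw [if_pos h, if_neg (by omega), add_zero, hsingle y h]
  · rw [if_neg (by omega), if_pos h, zero_add]
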